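/- arXiv:1812.03212 — 7 statements merged into one kernel-verified Lean document; each statement's English description precedes it below -/
import Mathlib

section
/- For every n ≥ 2 and every k with 1 ≤ k ≤ 2^(n-1), let x_k = 2^(n-1) + k - 1 and v_k = Λ_n(x_k). Then v_k / 2^(C(n-1,2)) - (k - 1/2) lies in the interval [-1/2, 1/2); in particular |v_k / 2^(C(n-1,2)) - (k - 1/2)| ≤ 1/2, i.e. the scaled encoded vertices v_k / 2^(C(n-1,2)) of the polytope 1-CUT(n) lie approximately on the line y = x - 1/2 with residuals of absolute value at most 1/2. -/
lemma sum_testBit (t : ℕ) : ∀ y : ℕ, y < 2^t →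
    ∑ m ∈ Finset.range t, (if y.testBit m then 2^m else 0) = y := by
  induction t with
  | zero => intro y hy; interval_cases y; simp
  | succ t ih =>
    intro y hy
    rw [Finset.sum_range_succ']
    have h2 : ∑ m ∈ Finset.range t, (if y.testBit (m+1) then 2^(m+1) else 0)
        = 2 * ∑ m ∈ Finset.range t, (if (y/2).testBit m then 2^m else 0) := by
      rw [Finset.mul_sum]
      refine Finset.sum_congr rfl fun m _ => ?_
      rw [Nat.testBit_succ]; split <;> ring
    have h3 : y / 2 < 2^t := by
      have := Nat.pow_succ 2 t
      omega
    have h4 : (if y.testBit 0 then 2^0 else 0) = y % 2 := by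
      rcases Nat.mod_two_eq_zero_or_one y with h | h <;>
        simp [Nat.testBit_zero, h]
    rw [h2, ih _ h3, h4]
    omega

lemma sum_two_pow (t : ℕ) : ∑ e ∈ Finset.range t, 2^e = 2^t - 1 := by
  induction t with
  | zero => simp
  | succ t ih => rw [Finset.sum_range_succ, ih]; have := Nat.one_le_two_pow (n := t); omega

lemma T_succ (n i : ℕ) (h1 : 1 ≤ i) (h2 : i ≤ n) :
    i * (2*n - (i+1)) / 2 = (i-1) * (2*n - i) / 2 + (n - i) := by
  have hkey : i * (2*n - (i+1)) = (i-1) * (2*n - i) + 2 * (n - i) := by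
    zify [h1, h2, Nat.le_trans h2 (by omega : n ≤ 2*n), (by omega : i + 1 ≤ 2*n)]
    ring
  rw [hkey, Nat.add_mul_div_left _ _ (by norm_num : 0 < 2)]

lemma T_even (n i : ℕ) (h1 : 1 ≤ i) : 2 ∣ (i-1) * (2*n - i) := by
  rcases Nat.even_or_odd i with h | h
  · rw [Nat.even_iff] at h
    exact Dvd.dvd.mul_left (by omega) _
  · rw [Nat.odd_iff] at h
    exact Dvd.dvd.mul_right (by omega) _

lemma T_mono (n a b : ℕ) (h1 : 1 ≤ a) (hab : a ≤ b) (hb : b ≤ n) :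
    (a-1)*(2*n-a)/2 ≤ (b-1)*(2*n-b)/2 := by
  have ea := Nat.mul_div_cancel' (T_even n a h1)
  have eb := Nat.mul_div_cancel' (T_even n b (le_trans h1 hab))
  have key : (a-1)*(2*n-a) ≤ (b-1)*(2*n-b) := by
    have hd1 : (0:ℤ) ≤ (b:ℤ) - (a:ℤ) := by
      have : (a:ℤ) ≤ (b:ℤ) := by exact_mod_cast hab
      linarith
    have hd2 : (0:ℤ) ≤ 2*(n:ℤ) + 1 - (a:ℤ) - (b:ℤ) := by
      have ha : (a:ℤ) ≤ (n:ℤ) := by exact_mod_cast le_trans hab hb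
      have hbn : (b:ℤ) ≤ (n:ℤ) := by exact_mod_cast hb
      linarith
    zify [h1, le_trans h1 hab, (by omega : a ≤ 2*n), (by omega : b ≤ 2*n)]
    nlinarith [mul_nonneg hd1 hd2]
  omega

lemma off_lt (n i j : ℕ) (hi : 1 ≤ i) (hij : i < j) (hj : j ≤ n) :
    (i-1)*(2*n-i)/2 + (j-i-1) < n.choose 2 := by
  have h2 : (i-1)*(2*n-i)/2 + (n-i) = i*(2*n-(i+1))/2 := (T_succ n i hi (by omega)).symm
  have h3 : i*(2*n-(i+1))/2 ≤ (n-1)*(2*n-n)/2 :=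
    T_mono n (i+1) n (by omega) (by omega) le_rfl
  have h4 : (n-1)*(2*n-n)/2 = n.choose 2 := by
    rw [Nat.choose_two_right]
    have h5 : 2*n-n = n := by omega
    rw [h5, Nat.mul_comm]
  omega

lemma off_key (n a b a' b' : ℕ) (h1 : 1 ≤ a) (h2 : a < b) (h3 : b ≤ n)
    (h4 : 1 ≤ a') (h5 : a' < b') (h6 : b' ≤ n) (h7 : a < a') :
    (a-1)*(2*n-a)/2 + (b-a-1) < (a'-1)*(2*n-a')/2 + (b'-a'-1) := by
  have e1 : (a-1)*(2*n-a)/2 + (n-a) = a*(2*n-(a+1))/2 := (T_succ n a h1 (by omega)).symm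
  have e2 : a*(2*n-(a+1))/2 ≤ (a'-1)*(2*n-a')/2 :=
    T_mono n (a+1) a' (by omega) (by omega) (by omega)
  omega

lemma off_inj (n i j i' j' : ℕ) (hi : 1 ≤ i) (hij : i < j) (hj : j ≤ n)
    (hi' : 1 ≤ i') (hij' : i' < j') (hj' : j' ≤ n)
    (h : (i-1)*(2*n-i)/2 + (j-i-1) = (i'-1)*(2*n-i')/2 + (j'-i'-1)) :
    i = i' ∧ j = j' := by
  have hii : i = i' := by
    rcases lt_trichotomy i i' with h' | h' | h'
    · exact absurd h (Nat.ne_of_lt (off_key n i j i' j' hi hij hj hi' hij' hj' h'))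
    · exact h'
    · exact absurd h.symm (Nat.ne_of_lt (off_key n i' j' i j hi' hij' hj' hi hij hj h'))
  subst hii
  exact ⟨rfl, by omega⟩

lemma off_ge (n i j : ℕ) (hi : 2 ≤ i) (hij : i < j) (hj : j ≤ n) :
    n - 1 ≤ (i-1)*(2*n-i)/2 + (j-i-1) := by
  have h1 : (2-1)*(2*n-2)/2 ≤ (i-1)*(2*n-i)/2 := T_mono n 2 i (by omega) hi (by omega)
  have h2 : (2-1)*(2*n-2)/2 = n - 1 := by simp; omega
  omega



/-- `concEnc n x` is `Λ_n(x)`: the natural number whose `C(n,2)`-bit binary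
representation is the concurrence vector `λ(x_[n])` of the `n`-bit binary
representation `(b_1, …, b_n)` of `x` (with `b_1` most significant).
The bit for the pair `(i,j)`, `1 ≤ i < j ≤ n`, equals `1` iff `b_i = b_j`;
pairs are ordered `(1,2),(1,3),…,(1,n),(2,3),…,(n-1,n)` with `(1,2)` the most
significant bit. -/
def concEnc (n x : ℕ) : ℕ :=
  ∑ i ∈ Finset.Icc 1 n, ∑ j ∈ Finset.Icc (i + 1) n,
    if x.testBit (n - i) = x.testBit (n - j)
    then 2 ^ (n.choose 2 - 1 - ((i - 1) * (2 * n - i) / 2 + (j - i - 1)))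
    else 0

/-- For `n ≥ 2` and `1 ≤ k ≤ 2^(n-1)`, with `x_k = 2^(n-1)+k-1` and
`v_k = Λ_n(x_k)`, the quantity `v_k / 2^C(n-1,2) - (k - 1/2)` lies in the
interval `[-1/2, 1/2)`; in particular its absolute value is at most `1/2`. -/
theorem stmt_0 (n k : ℕ) (hn : 2 ≤ n) (hk1 : 1 ≤ k) (hk2 : k ≤ 2 ^ (n - 1)) :
    ((concEnc n (2 ^ (n - 1) + k - 1) : ℝ) / 2 ^ ((n - 1).choose 2)
        - ((k : ℝ) - 1 / 2)) ∈ Set.Ico (-(1 / 2) : ℝ) (1 / 2) ∧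
    |(concEnc n (2 ^ (n - 1) + k - 1) : ℝ) / 2 ^ ((n - 1).choose 2)
        - ((k : ℝ) - 1 / 2)| ≤ 1 / 2 := by
  set y := k - 1 with hy
  have hylt : y < 2^(n-1) := by omega
  have hxk : 2 ^ (n - 1) + k - 1 = 2^(n-1) + y := by omega
  rw [hxk]
  set x := 2^(n-1) + y with hxdef
  set c' := (n-1).choose 2 with hc'
  have hc : n.choose 2 = c' + (n-1) := by
    have hn1 : n = (n-1) + 1 := by omega
    conv_lhs => rw [hn1]
    rw [Nat.choose_succ_succ, Nat.choose_one_right]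
    show (n-1) + (n-1).choose 2 = c' + (n-1)
    omega
  -- bit facts
  have hx1 : x.testBit (n-1) = true := by
    rw [hxdef, Nat.testBit_two_pow_add_eq, Nat.testBit_lt_two_pow hylt]
    rfl
  have hxlow : ∀ i, i < n-1 → x.testBit i = y.testBit i := fun i hi =>
    Nat.testBit_two_pow_add_gt hi y
  -- split the sum
  have hins : Finset.Icc 1 n = insert 1 (Finset.Icc 2 n) := by
    ext a; simp only [Finset.mem_Icc, Finset.mem_insert]; omega
  have hnotmem : (1:ℕ) ∉ Finset.Icc 2 n := by simp
  set B := ∑ i ∈ Finset.Icc 2 n, ∑ j ∈ Finset.Icc (i+1) n,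
      (if x.testBit (n - i) = x.testBit (n - j)
       then 2 ^ (n.choose 2 - 1 - ((i - 1) * (2 * n - i) / 2 + (j - i - 1)))
       else 0) with hBdef
  have hsplit : concEnc n x = (∑ j ∈ Finset.Icc 2 n,
      (if x.testBit (n - 1) = x.testBit (n - j)
       then 2 ^ (n.choose 2 - 1 - ((1 - 1) * (2 * n - 1) / 2 + (j - 1 - 1)))
       else 0)) + B := by
    rw [concEnc, hins, Finset.sum_insert hnotmem]
  -- Part A
  have hA : (∑ j ∈ Finset.Icc 2 n,
      (if x.testBit (n - 1) = x.testBit (n - j)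
       then 2 ^ (n.choose 2 - 1 - ((1 - 1) * (2 * n - 1) / 2 + (j - 1 - 1)))
       else 0)) = 2^c' * y := by
    have step1 : ∀ j ∈ Finset.Icc 2 n,
        (if x.testBit (n - 1) = x.testBit (n - j)
         then 2 ^ (n.choose 2 - 1 - ((1 - 1) * (2 * n - 1) / 2 + (j - 1 - 1)))
         else 0)
        = 2^c' * (if y.testBit (n-j) then 2^(n-j) else 0) := by
      intro j hj
      simp only [Finset.mem_Icc] at hj
      rw [hx1, hxlow (n-j) (by omega)]
      have hexp : n.choose 2 - 1 - ((1 - 1) * (2 * n - 1) / 2 + (j - 1 - 1))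
          = c' + (n - j) := by
        norm_num
        omega
      rw [hexp, pow_add]
      cases hbit : y.testBit (n - j) <;> simp [hbit]
    rw [Finset.sum_congr rfl step1, ← Finset.mul_sum]
    congr 1
    have reidx : ∑ j ∈ Finset.Icc 2 n, (if y.testBit (n-j) then 2^(n-j) else 0)
        = ∑ m ∈ Finset.range (n-1), (if y.testBit m then 2^m else 0) := by
      refine Finset.sum_nbij' (fun j => n - j) (fun m => n - m) ?_ ?_ ?_ ?_ ?_
      · intro a ha; simp only [Finset.mem_Icc] at ha; simp only [Finset.mem_range]; omega
      · intro a ha; simp only [Finset.mem_range] at ha; simp only [Finset.mem_Icc]; omega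
      · intro a ha; simp only [Finset.mem_Icc] at ha; show n - (n - a) = a; omega
      · intro a ha; simp only [Finset.mem_range] at ha; show n - (n - a) = a; omega
      · intro a _; rfl
    rw [reidx, sum_testBit (n-1) y hylt]
  -- Part B
  have hB : B ≤ 2^c' - 1 := by
    rw [hBdef, Finset.sum_sigma']
    have hc'pos : ∀ m : ℕ, 3 ≤ m → 1 ≤ (m-1).choose 2 := by
      intro m hm
      exact Nat.choose_pos (by omega)
    calc ∑ p ∈ (Finset.Icc 2 n).sigma (fun i => Finset.Icc (i+1) n),
          (if x.testBit (n - p.1) = x.testBit (n - p.2)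
           then 2 ^ (n.choose 2 - 1 - ((p.1 - 1) * (2 * n - p.1) / 2 + (p.2 - p.1 - 1)))
           else 0)
        ≤ ∑ p ∈ (Finset.Icc 2 n).sigma (fun i => Finset.Icc (i+1) n),
            2 ^ (n.choose 2 - 1 - ((p.1 - 1) * (2 * n - p.1) / 2 + (p.2 - p.1 - 1))) := by
          refine Finset.sum_le_sum fun p _ => ?_
          split <;> simp
      _ = ∑ e ∈ ((Finset.Icc 2 n).sigma (fun i => Finset.Icc (i+1) n)).image
            (fun p => n.choose 2 - 1 - ((p.1 - 1) * (2 * n - p.1) / 2 + (p.2 - p.1 - 1))),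
            2 ^ e := by
          refine (Finset.sum_image ?_).symm
          intro p hp q hq hpq
          simp only [Finset.mem_coe, Finset.mem_sigma, Finset.mem_Icc] at hp hq
          have hop := off_lt n p.1 p.2 (by omega) (by omega) (by omega)
          have hoq := off_lt n q.1 q.2 (by omega) (by omega) (by omega)
          have hoff : (p.1-1)*(2*n-p.1)/2 + (p.2-p.1-1)
              = (q.1-1)*(2*n-q.1)/2 + (q.2-q.1-1) := by simp only at hpq; omega
          obtain ⟨h1, h2⟩ := off_inj n p.1 p.2 q.1 q.2 (by omega) (by omega) (by omega)
            (by omega) (by omega) (by omega) hoff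
          exact Sigma.ext h1 (by simp [h2])
      _ ≤ ∑ e ∈ Finset.range c', 2 ^ e := by
          refine Finset.sum_le_sum_of_subset ?_
          intro e he
          simp only [Finset.mem_image, Finset.mem_sigma, Finset.mem_Icc] at he
          obtain ⟨p, ⟨hp1, hp2⟩, rfl⟩ := he
          simp only [Finset.mem_range]
          have hge := off_ge n p.1 p.2 (by omega) (by omega) (by omega)
          have hlt := off_lt n p.1 p.2 (by omega) (by omega) (by omega)
          have := hc'pos n (by omega)
          omega
      _ = 2^c' - 1 := sum_two_pow c'
  -- nat bounds
  have hlow : y * 2^c' ≤ concEnc n x := by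
    rw [hsplit, hA, Nat.mul_comm]
    exact Nat.le_add_right _ _
  have hhigh : concEnc n x < (y+1) * 2^c' := by
    rw [hsplit, hA]
    have h1 : 2^c' * y + B ≤ 2^c' * y + (2^c' - 1) := Nat.add_le_add_left hB _
    have h2 : 2^c' * y + (2^c' - 1) < (y+1) * 2^c' := by
      have hp : 1 ≤ 2^c' := Nat.one_le_two_pow
      have : (y+1) * 2^c' = 2^c' * y + 2^c' := by ring
      omega
    omega
  -- real endgame
  have h2R : (0:ℝ) < 2 ^ c' := by positivity
  have hlowR : ((y:ℝ)) * 2^c' ≤ (concEnc n x : ℝ) := by exact_mod_cast hlow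
  have hhighR : (concEnc n x : ℝ) < ((y:ℝ)+1) * 2^c' := by exact_mod_cast hhigh
  have hkR : (k:ℝ) = (y:ℝ) + 1 := by
    have : k = y + 1 := by omega
    rw [this]; push_cast; ring
  have e1 : (y:ℝ) ≤ (concEnc n x : ℝ) / 2^c' := (le_div_iff₀ h2R).2 hlowR
  have e2 : (concEnc n x : ℝ) / 2^c' < (y:ℝ) + 1 := (div_lt_iff₀ h2R).2 hhighR
  constructor
  · constructor
    · rw [hkR]; linarith
    · rw [hkR]; linarith
  · rw [abs_le]
    constructor <;> rw [hkR] <;> linarith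
end

section
/- For every n ≥ 2 and every k with 1 ≤ k ≤ 2^(n-1), let x_k = 2^(n-1) + k - 1 and v_k = Λ_n(x_k). Then (k-1)·2^(C(n-1,2)) ≤ v_k < k·2^(C(n-1,2)). -/
lemma geom_aux (n : ℕ) : ∑ t ∈ Finset.range n, 2 ^ t = 2 ^ n - 1 := by
  induction n with
  | zero => rfl
  | succ m ih =>
    rw [Finset.sum_range_succ, ih, pow_succ]
    have : 1 ≤ 2 ^ m := Nat.one_le_two_pow
    omega

lemma bitsum_aux (m : ℕ) : ∀ y, y < 2 ^ m →
    ∑ t ∈ Finset.range m, (if y.testBit t then 2 ^ t else 0) = y := by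
  induction m with
  | zero => intro y hy; interval_cases y; simp
  | succ m ih =>
    intro y hy
    rw [Finset.sum_range_succ']
    have h1 : ∀ t, (if y.testBit (t + 1) then 2 ^ (t + 1) else 0)
        = 2 * (if (y / 2).testBit t then 2 ^ t else 0) := by
      intro t
      rw [Nat.testBit_add_one]
      split <;> ring
    simp only [h1, ← Finset.mul_sum]
    rw [ih (y / 2) (by omega)]
    rw [Nat.testBit_zero]
    rcases Nat.even_or_odd y with h | h <;>
      · rcases h with ⟨c, hc⟩
        subst hc
        simp only [pow_zero]
        split <;> rename_i hd <;> simp at hd <;> omega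

lemma offset_aux (n i : ℕ) (h1 : 1 ≤ i) (h2 : i ≤ n) :
    (i + 1 - 1) * (2 * (n + 1) - (i + 1)) / 2 = (i - 1) * (2 * n - i) / 2 + n := by
  obtain ⟨a, rfl⟩ : ∃ a, i = a + 1 := ⟨i - 1, by omega⟩
  obtain ⟨b, rfl⟩ : ∃ b, n = a + 1 + b := ⟨n - (a + 1), by omega⟩
  have e1 : 2 * (a + 1 + b + 1) - (a + 1 + 1) = a + 2 * b + 2 := by omega
  have e2 : 2 * (a + 1 + b) - (a + 1) = a + 2 * b + 1 := by omega
  rw [e1, e2]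
  simp only [Nat.add_sub_cancel]
  have : (a + 1) * (a + 2 * b + 2) = a * (a + 2 * b + 1) + 2 * (a + 1 + b) := by ring
  rw [this, Nat.add_mul_div_left _ _ (by norm_num : (0:ℕ) < 2)]

lemma choose_succ_two (n : ℕ) : (n + 1).choose 2 = n.choose 2 + n := by
  rw [Nat.choose_two_right, Nat.choose_two_right]
  rcases n with _ | b
  · rfl
  · simp only [Nat.add_sub_cancel]
    have : (b + 1 + 1) * (b + 1) = (b + 1) * b + 2 * (b + 1) := by ring
    rw [this, Nat.add_mul_div_left _ _ (by norm_num : (0:ℕ) < 2)]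

lemma concEnc_succ (n x : ℕ) (hn : 1 ≤ n) :
    concEnc (n + 1) x =
      (∑ t ∈ Finset.range n, if x.testBit n = x.testBit t then 2 ^ t else 0)
        * 2 ^ n.choose 2 + concEnc n (x % 2 ^ n) := by
  have hsplit : Finset.Icc 1 (n + 1) = insert 1 (Finset.Icc 2 (n + 1)) := by
    ext y; simp [Finset.mem_Icc]; omega
  rw [concEnc, hsplit, Finset.sum_insert (by simp)]
  have hrow1 : ∑ j ∈ Finset.Icc (1 + 1) (n + 1),
      (if x.testBit (n + 1 - 1) = x.testBit (n + 1 - j)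
       then 2 ^ ((n + 1).choose 2 - 1 - ((1 - 1) * (2 * (n + 1) - 1) / 2 + (j - 1 - 1)))
       else 0)
    = (∑ t ∈ Finset.range n, if x.testBit n = x.testBit t then 2 ^ t else 0)
        * 2 ^ n.choose 2 := by
    rw [Finset.sum_mul]
    refine Finset.sum_nbij' (fun j => n + 1 - j) (fun t => n + 1 - t) ?_ ?_ ?_ ?_ ?_
    · intro a ha; simp only [Finset.mem_Icc] at ha; simp only [Finset.mem_range]; omega
    · intro a ha; simp only [Finset.mem_range] at ha; simp only [Finset.mem_Icc]; omega
    · intro a ha; simp only [Finset.mem_Icc] at ha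
      show n + 1 - (n + 1 - a) = a
      omega
    · intro a ha; simp only [Finset.mem_range] at ha
      show n + 1 - (n + 1 - a) = a
      omega
    · intro j hj
      simp only [Finset.mem_Icc] at hj
      show _ = (if x.testBit n = x.testBit (n + 1 - j) then 2 ^ (n + 1 - j) else 0)
          * 2 ^ n.choose 2
      rw [ite_mul, zero_mul, ← pow_add]
      have hns : n + 1 - 1 = n := by omega
      rw [hns]
      have h0 : (1 - 1) * (2 * (n + 1) - 1) / 2 = 0 := by norm_num
      have hexp : (n + 1).choose 2 - 1 - ((1 - 1) * (2 * (n + 1) - 1) / 2 + (j - 1 - 1))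
          = n + 1 - j + n.choose 2 := by
        rw [h0, choose_succ_two]
        omega
      rw [hexp]
  rw [hrow1]
  congr 1
  -- remaining rows
  rw [concEnc]
  have hm1 : Finset.Icc 2 (n + 1) = Finset.map (addRightEmbedding 1) (Finset.Icc 1 n) := by
    rw [Finset.map_add_right_Icc]
  rw [hm1, Finset.sum_map]
  refine Finset.sum_congr rfl ?_
  intro i hi
  simp only [Finset.mem_Icc] at hi
  have hm2 : Finset.Icc (addRightEmbedding 1 i + 1) (n + 1)
      = Finset.map (addRightEmbedding 1) (Finset.Icc (i + 1) n) := by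
    rw [Finset.map_add_right_Icc]
    simp [addRightEmbedding_apply]
  rw [hm2, Finset.sum_map]
  refine Finset.sum_congr rfl ?_
  intro j hj
  simp only [Finset.mem_Icc] at hj
  simp only [addRightEmbedding_apply]
  have hbi : (x % 2 ^ n).testBit (n - i) = x.testBit (n - i) := by
    rw [Nat.testBit_mod_two_pow]
    have : n - i < n := by omega
    simp [this]
  have hbj : (x % 2 ^ n).testBit (n - j) = x.testBit (n - j) := by
    rw [Nat.testBit_mod_two_pow]
    have : n - j < n := by omega
    simp [this]
  have hidx1 : n + 1 - (i + 1) = n - i := by omega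
  have hidx2 : n + 1 - (j + 1) = n - j := by omega
  have hexp : (n + 1).choose 2 - 1
        - ((i + 1 - 1) * (2 * (n + 1) - (i + 1)) / 2 + (j + 1 - (i + 1) - 1))
      = n.choose 2 - 1 - ((i - 1) * (2 * n - i) / 2 + (j - i - 1)) := by
    rw [offset_aux n i hi.1 hi.2, choose_succ_two]
    have hc1 : 0 < n.choose 2 := Nat.choose_pos (by omega)
    omega
  rw [hidx1, hidx2, hbi, hbj, hexp]

lemma concEnc_lt (n : ℕ) : ∀ x, concEnc n x < 2 ^ n.choose 2 := by
  induction n with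
  | zero => intro x; simp [concEnc]
  | succ m ih =>
    intro x
    rcases Nat.eq_zero_or_pos m with rfl | hm
    · norm_num [concEnc]
    · rw [concEnc_succ m x hm]
      have hA : (∑ t ∈ Finset.range m, if x.testBit m = x.testBit t then 2 ^ t else 0)
          ≤ 2 ^ m - 1 := by
        calc (∑ t ∈ Finset.range m, if x.testBit m = x.testBit t then 2 ^ t else 0)
            ≤ ∑ t ∈ Finset.range m, 2 ^ t := by
              refine Finset.sum_le_sum ?_
              intro t _; split <;> simp
          _ = 2 ^ m - 1 := geom_aux m
      have hB := ih (x % 2 ^ m)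
      rw [choose_succ_two, pow_add]
      calc (∑ t ∈ Finset.range m, if x.testBit m = x.testBit t then 2 ^ t else 0)
            * 2 ^ m.choose 2 + concEnc m (x % 2 ^ m)
          < (∑ t ∈ Finset.range m, if x.testBit m = x.testBit t then 2 ^ t else 0)
            * 2 ^ m.choose 2 + 2 ^ m.choose 2 := by omega
        _ = ((∑ t ∈ Finset.range m, if x.testBit m = x.testBit t then 2 ^ t else 0) + 1)
            * 2 ^ m.choose 2 := by ring
        _ ≤ 2 ^ m * 2 ^ m.choose 2 := by
            refine Nat.mul_le_mul_right _ ?_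
            have : 1 ≤ 2 ^ m := Nat.one_le_two_pow
            omega
        _ = 2 ^ m.choose 2 * 2 ^ m := by ring

/-- For `n ≥ 2` and `1 ≤ k ≤ 2^(n-1)`, with `v_k = Λ_n(2^(n-1)+k-1)`,
one has `(k-1)·2^C(n-1,2) ≤ v_k < k·2^C(n-1,2)`. -/
theorem stmt_2 (n k : ℕ) (hn : 2 ≤ n) (hk1 : 1 ≤ k) (hk2 : k ≤ 2 ^ (n - 1)) :
    (k - 1) * 2 ^ ((n - 1).choose 2) ≤ concEnc n (2 ^ (n - 1) + k - 1) ∧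
    concEnc n (2 ^ (n - 1) + k - 1) < k * 2 ^ ((n - 1).choose 2) := by
  obtain ⟨m, rfl⟩ : ∃ m, n = m + 1 := ⟨n - 1, by omega⟩
  have hm : 1 ≤ m := by omega
  simp only [Nat.add_sub_cancel] at *
  have hx : 2 ^ m + k - 1 = 2 ^ m + (k - 1) := by omega
  rw [hx]
  set x := 2 ^ m + (k - 1) with hxdef
  have hk1' : k - 1 < 2 ^ m := by omega
  have hmod : x % 2 ^ m = k - 1 := by
    rw [hxdef, Nat.add_mod_left, Nat.mod_eq_of_lt hk1']
  have hbit : x.testBit m = true := by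
    rw [Nat.testBit_eq_decide_div_mod_eq]
    have hdiv : x / 2 ^ m = 1 := by
      refine Nat.div_eq_of_lt_le (by omega) ?_
      have : (1 + 1) * 2 ^ m = 2 ^ m + 2 ^ m := by ring
      omega
    rw [hdiv]
    decide
  have hA : (∑ t ∈ Finset.range m, if x.testBit m = x.testBit t then 2 ^ t else 0)
      = k - 1 := by
    rw [← bitsum_aux m (k - 1) hk1']
    refine Finset.sum_congr rfl ?_
    intro t ht
    simp only [Finset.mem_range] at ht
    have hbt : x.testBit t = (k - 1).testBit t := by
      rw [← hmod, Nat.testBit_mod_two_pow]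
      simp [ht]
    rw [hbit, hbt]
    cases h : (k - 1).testBit t <;> simp [h]
  rw [concEnc_succ m x hm, hA, hmod]
  have hlt := concEnc_lt m (k - 1)
  constructor
  · omega
  · have h2 : (k - 1) * 2 ^ m.choose 2 + 2 ^ m.choose 2 = k * 2 ^ m.choose 2 := by
      have hk : k - 1 + 1 = k := by omega
      calc (k - 1) * 2 ^ m.choose 2 + 2 ^ m.choose 2
          = (k - 1 + 1) * 2 ^ m.choose 2 := by ring
        _ = k * 2 ^ m.choose 2 := by rw [hk]
    omega
end

section
/- Let n ≥ 2 and let x, y be natural numbers with 2^(n-1) ≤ x < y ≤ 2^n - 1 (i.e. both are n-bit numbers with leading digit 1). Then Λ_n(x) < Λ_n(y). -/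
/-- offset of row `i` in the concurrence vector. -/
def qrow (n i : ℕ) : ℕ := (i - 1) * (2 * n - i) / 2

lemma qrow_rec (n i : ℕ) (h1 : 1 ≤ i) (h2 : i ≤ n) :
    qrow n (i + 1) = qrow n i + (n - i) := by
  obtain ⟨a, rfl⟩ : ∃ a, i = a + 1 := ⟨i - 1, by omega⟩
  obtain ⟨b, rfl⟩ : ∃ b, n = a + 1 + b := ⟨n - (a + 1), by omega⟩
  unfold qrow
  have e1 : a + 1 + 1 - 1 = a + 1 := by omega
  have e2 : 2 * (a + 1 + b) - (a + 1 + 1) = a + 2 * b := by omega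
  have e3 : a + 1 - 1 = a := by omega
  have e4 : 2 * (a + 1 + b) - (a + 1) = a + 2 * b + 1 := by omega
  have e5 : a + 1 + b - (a + 1) = b := by omega
  rw [e1, e2, e3, e4, e5]
  have h6 : (a + 1) * (a + 2 * b) = a * (a + 2 * b + 1) + 2 * b := by ring
  have h7 : 2 ∣ a * (a + 2 * b + 1) := by
    rcases Nat.even_or_odd a with h | h
    · exact Dvd.dvd.mul_right h.two_dvd _
    · exact Dvd.dvd.mul_left (by
        rcases h with ⟨c, hc⟩
        exact ⟨c + b + 1, by omega⟩) _
  omega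

lemma qrow_n (n : ℕ) : qrow n n = n.choose 2 := by
  unfold qrow
  rw [Nat.choose_two_right]
  congr 1
  have : 2 * n - n = n := by omega
  rw [this, Nat.mul_comm]

lemma qrow_two (n : ℕ) (hn : 2 ≤ n) : qrow n 2 = n - 1 := by
  unfold qrow; omega

lemma qrow_le_qrow_n (n : ℕ) : ∀ d i, 1 ≤ i → i + d = n → qrow n i ≤ qrow n n := by
  intro d
  induction d with
  | zero =>
    intro i h1 h2
    have : i = n := by omega
    rw [this]
  | succ d ih =>
    intro i h1 h2
    have := qrow_rec n i h1 (by omega)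
    have := ih (i + 1) (by omega) (by omega)
    omega

lemma pow2sum (m : ℕ) : ∑ k ∈ Finset.range m, 2 ^ k = 2 ^ m - 1 := by
  induction m with
  | zero => simp
  | succ m ih =>
    rw [Finset.sum_range_succ, ih]
    have : 0 < 2 ^ m := Nat.pow_pos (by norm_num)
    rw [pow_succ]; omega

lemma modsum (t x : ℕ) : x % 2 ^ t = ∑ k ∈ Finset.range t, if x.testBit k then 2 ^ k else 0 := by
  induction t with
  | zero => simp [Nat.mod_one]
  | succ t ih =>
    rw [Finset.sum_range_succ, ← ih, pow_succ, Nat.mod_mul]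
    have hb : x.testBit t = decide (x / 2 ^ t % 2 = 1) := Nat.testBit_eq_decide_div_mod_eq
    have h2 : x / 2 ^ t % 2 = 0 ∨ x / 2 ^ t % 2 = 1 := by omega
    rcases h2 with h | h
    · rw [h]; simp [hb, h]
    · rw [h]; simp [hb, h]

lemma icc_insert (a b : ℕ) (h : a ≤ b) : Finset.Icc a b = insert a (Finset.Icc (a + 1) b) := by
  ext x; simp only [Finset.mem_Icc, Finset.mem_insert]; omega

lemma geomIcc' : ∀ d a b, a + d = b → ∑ j ∈ Finset.Icc (a + 1) b, 2 ^ (b - j) = 2 ^ d - 1 := by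
  intro d
  induction d with
  | zero =>
    intro a b h
    rw [Finset.Icc_eq_empty (by omega)]; simp
  | succ d ih =>
    intro a b h
    rw [icc_insert (a + 1) b (by omega), Finset.sum_insert (by simp), ih (a + 1) b (by omega)]
    have hb : b - (a + 1) = d := by omega
    rw [hb]
    have : 0 < 2 ^ d := Nat.pow_pos (by norm_num)
    rw [pow_succ]; omega

lemma Slem (n : ℕ) : ∀ d i, 1 ≤ i → i + d = n →
    ∑ i' ∈ Finset.Icc i n, ∑ j ∈ Finset.Icc (i' + 1) n,
      (2:ℕ) ^ (n.choose 2 - 1 - (qrow n i' + (j - i' - 1)))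
    = 2 ^ (n.choose 2 - qrow n i) - 1 := by
  intro d
  induction d with
  | zero =>
    intro i h1 h2
    have hin : i = n := by omega
    subst hin
    rw [Finset.Icc_self, Finset.sum_singleton, Finset.Icc_eq_empty (by omega), Finset.sum_empty,
      qrow_n, Nat.sub_self]
    simp
  | succ d ih =>
    intro i h1 h2
    have hrec := qrow_rec n i h1 (by omega)
    have hle : qrow n (i + 1) ≤ n.choose 2 := by
      rw [← qrow_n n]
      exact qrow_le_qrow_n n (n - (i + 1)) (i + 1) (by omega) (by omega)
    rw [icc_insert i n (by omega), Finset.sum_insert (by simp), ih (i + 1) (by omega) (by omega)]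
    set C := n.choose 2 with hC
    set e := C - qrow n (i + 1) with he
    have hinner : ∑ j ∈ Finset.Icc (i + 1) n, (2:ℕ) ^ (C - 1 - (qrow n i + (j - i - 1)))
        = 2 ^ e * (2 ^ (n - i) - 1) := by
      rw [← geomIcc' (n - i) i n (by omega), Finset.mul_sum]
      apply Finset.sum_congr rfl
      intro j hj
      rw [Finset.mem_Icc] at hj
      rw [← pow_add]
      congr 1
      omega
    rw [hinner]
    have hEq : C - qrow n i = e + (n - i) := by omega
    rw [hEq, pow_add]
    have hP : 0 < 2 ^ e := Nat.pow_pos (by norm_num)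
    have hQ : 0 < 2 ^ (n - i) := Nat.pow_pos (by norm_num)
    have key : 2 ^ e * (2 ^ (n - i) - 1) + 2 ^ e = 2 ^ e * 2 ^ (n - i) := by
      have h1 : 2 ^ (n - i) - 1 + 1 = 2 ^ (n - i) := by omega
      calc 2 ^ e * (2 ^ (n - i) - 1) + 2 ^ e = 2 ^ e * ((2 ^ (n - i) - 1) + 1) := by ring
        _ = 2 ^ e * 2 ^ (n - i) := by rw [h1]
    omega

lemma row1 (n x : ℕ) (hn : 2 ≤ n) :
    ∑ j ∈ Finset.Icc 2 n,
      (if x.testBit (n - j) then 2 ^ (n.choose 2 - (n - 1) + (n - j)) else 0)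
    = 2 ^ (n.choose 2 - (n - 1)) * (x % 2 ^ (n - 1)) := by
  rw [modsum (n - 1) x, Finset.mul_sum]
  apply Finset.sum_nbij' (fun j => n - j) (fun k => n - k)
  · intro a ha; rw [Finset.mem_Icc] at ha; rw [Finset.mem_range]; omega
  · intro a ha; rw [Finset.mem_range] at ha; rw [Finset.mem_Icc]; omega
  · intro a ha; rw [Finset.mem_Icc] at ha; omega
  · intro a ha; rw [Finset.mem_range] at ha; omega
  · intro a ha
    rw [Finset.mem_Icc] at ha
    cases hb : x.testBit (n - a) with
    | false => simp
    | true => simp [pow_add]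

/-- For `n ≥ 2` and `2^(n-1) ≤ x < y ≤ 2^n - 1` (both `n`-bit numbers with
leading digit `1`), `Λ_n(x) < Λ_n(y)`. -/
theorem stmt_3 (n x y : ℕ) (hn : 2 ≤ n) (hx : 2 ^ (n - 1) ≤ x) (hxy : x < y)
    (hy : y ≤ 2 ^ n - 1) :
    concEnc n x < concEnc n y := by
  have hC : n - 1 ≤ n.choose 2 := by
    have h2 := qrow_two n hn
    have h3 := qrow_le_qrow_n n (n - 2) 2 (by omega) (by omega)
    rw [qrow_n] at h3; omega
  have hpow : 2 ^ n = 2 ^ (n - 1) * 2 := by rw [← pow_succ]; congr 1; omega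
  have hpos : 0 < 2 ^ (n - 1) := Nat.pow_pos (by norm_num)
  have hy2 : y < 2 ^ n := by omega
  have hx2 : x < 2 ^ n := by omega
  have hbit : ∀ z, 2 ^ (n - 1) ≤ z → z < 2 ^ n → z.testBit (n - 1) = true := by
    intro z h1 h2
    have hdiv : z / 2 ^ (n - 1) = 1 := Nat.div_eq_of_lt_le (by omega) (by omega)
    simp [Nat.testBit_eq_decide_div_mod_eq, hdiv]
  have hbx := hbit x hx hx2
  have hby := hbit y (by omega) hy2
  have decomp : ∀ z, z.testBit (n - 1) = true →
      concEnc n z = 2 ^ (n.choose 2 - (n - 1)) * (z % 2 ^ (n - 1)) +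
        ∑ i ∈ Finset.Icc 2 n, ∑ j ∈ Finset.Icc (i + 1) n,
          (if z.testBit (n - i) = z.testBit (n - j)
           then 2 ^ (n.choose 2 - 1 - ((i - 1) * (2 * n - i) / 2 + (j - i - 1))) else 0) := by
    intro z hz
    unfold concEnc
    rw [icc_insert 1 n (by omega), Finset.sum_insert (by simp)]
    have h11 : Finset.Icc (1 + 1) n = Finset.Icc 2 n := by norm_num
    rw [h11]
    congr 1
    rw [← row1 n z hn]
    apply Finset.sum_congr rfl
    intro j hj
    rw [Finset.mem_Icc] at hj
    rw [hz]
    cases hb : z.testBit (n - j) with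
    | false => simp
    | true =>
      simp only [if_pos rfl]
      have hE : n.choose 2 - 1 - ((1 - 1) * (2 * n - 1) / 2 + (j - 1 - 1))
          = n.choose 2 - (n - 1) + (n - j) := by omega
      rw [hE]
  have hBbound : ∀ z : ℕ,
      (∑ i ∈ Finset.Icc 2 n, ∑ j ∈ Finset.Icc (i + 1) n,
        (if z.testBit (n - i) = z.testBit (n - j)
         then 2 ^ (n.choose 2 - 1 - ((i - 1) * (2 * n - i) / 2 + (j - i - 1))) else 0))
      ≤ 2 ^ (n.choose 2 - (n - 1)) - 1 := by
    intro z
    have hS := Slem n (n - 2) 2 (by omega) (by omega)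
    rw [qrow_two n hn] at hS
    simp only [qrow] at hS
    rw [← hS]
    apply Finset.sum_le_sum
    intro i _
    apply Finset.sum_le_sum
    intro j _
    split
    · exact le_refl _
    · exact Nat.zero_le _
  have hAx : x % 2 ^ (n - 1) = x - 2 ^ (n - 1) := by
    rw [Nat.mod_eq_sub_mod hx, Nat.mod_eq_of_lt (by omega)]
  have hAy : y % 2 ^ (n - 1) = y - 2 ^ (n - 1) := by
    rw [Nat.mod_eq_sub_mod (by omega), Nat.mod_eq_of_lt (by omega)]
  set m := n.choose 2 - (n - 1) with hm
  have hmpos : 0 < 2 ^ m := Nat.pow_pos (by norm_num)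
  have hAlt : x % 2 ^ (n - 1) + 1 ≤ y % 2 ^ (n - 1) := by omega
  have hmul : 2 ^ m * (x % 2 ^ (n - 1)) + 2 ^ m ≤ 2 ^ m * (y % 2 ^ (n - 1)) := by
    calc 2 ^ m * (x % 2 ^ (n - 1)) + 2 ^ m = 2 ^ m * (x % 2 ^ (n - 1) + 1) := by ring
      _ ≤ 2 ^ m * (y % 2 ^ (n - 1)) := Nat.mul_le_mul_left _ hAlt
  have hdx := decomp x hbx
  have hdy := decomp y hby
  have hbX := hBbound x
  have hbY := hBbound y
  omega
end

section
/- Let n ≥ 2 and let x be a natural number with 2^(n-1) ≤ x < 2^n - 1, so that x and x+1 are both n-bit numbers with leading digit 1. Then Λ_n(x+1) > Λ_n(x). -/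
namespace Stmt4Aux

/-- partial sums of lexicographic ranks -/
def s (n i : ℕ) : ℕ := (i - 1) * (2 * n - i) / 2

/-- lexicographic rank of pair (i,j) -/
def off (n i j : ℕ) : ℕ := s n i + (j - i - 1)

lemma two_mul_s (n i : ℕ) (h2 : i ≤ 2 * n) : 2 * s n i = (i - 1) * (2 * n - i) := by
  apply Nat.mul_div_cancel'
  rcases Nat.even_or_odd i with he | ho
  · have : Even (2 * n - i) := (Nat.even_sub h2).2 (by simp [he])
    exact Dvd.dvd.mul_left this.two_dvd _
  · have : Even (i - 1) := Nat.Odd.sub_odd ho odd_one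
    exact Dvd.dvd.mul_right this.two_dvd _

lemma s_succ (n i : ℕ) (h1 : 1 ≤ i) (h2 : i ≤ n) : s n (i + 1) = s n i + (n - i) := by
  obtain ⟨a, rfl⟩ : ∃ a, i = a + 1 := ⟨i - 1, by omega⟩
  obtain ⟨b, hb⟩ : ∃ b, n = (a + 1) + b := ⟨n - (a + 1), by omega⟩
  subst hb
  have ha := two_mul_s (a + 1 + b) (a + 1) (by omega)
  have hb2 := two_mul_s (a + 1 + b) (a + 2) (by omega)
  rw [show 2 * (a + 1 + b) - (a + 1) = a + 2 * b + 1 from by omega] at ha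
  rw [show 2 * (a + 1 + b) - (a + 2) = a + 2 * b from by omega] at hb2
  rw [show a + 1 - 1 = a from by omega] at ha
  rw [show a + 2 - 1 = a + 1 from by omega] at hb2
  rw [show a + 1 + 1 = a + 2 from by omega]
  have key : (a + 1) * (a + 2 * b) = a * (a + 2 * b + 1) + 2 * b := by ring
  omega

lemma s_mono (n : ℕ) : ∀ i' i, 1 ≤ i → i < i' → i' ≤ n → s n i + (n - i) ≤ s n i' := by
  intro i'
  induction i' with
  | zero => intro i _ _ _; omega
  | succ m ih =>
    intro i h1 h2 h3
    rcases Nat.lt_or_ge i m with h | h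
    · have hih := ih i h1 h (by omega)
      have hs := s_succ n m (by omega) (by omega)
      omega
    · have : i = m := by omega
      subst this
      rw [s_succ n i h1 (by omega)]

lemma off_lt_off (n i j i' j' : ℕ) (h : 1 ≤ i) (hij : i < j) (hj : j ≤ n)
    (hij' : i' < j') (hj' : j' ≤ n)
    (hlex : i < i' ∨ (i = i' ∧ j < j')) : off n i j < off n i' j' := by
  rcases hlex with h1 | ⟨rfl, h1⟩
  · have := s_mono n i' i h h1 (by omega)
    unfold off
    omega
  · unfold off
    omega

lemma s_one (n : ℕ) : s n 1 = 0 := by simp [s]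

lemma s_two_le (n : ℕ) (hn : 2 ≤ n) : ∀ i, 2 ≤ i → i ≤ n → n - 1 ≤ s n i := by
  intro i h2 h3
  have hs2 : 2 * s n 2 = 1 * (2 * n - 2) := two_mul_s n 2 (by omega)
  rcases Nat.eq_or_lt_of_le h2 with rfl | h
  · omega
  · have := s_mono n i 2 (by omega) h h3
    omega

lemma s_top (n : ℕ) (hn : 2 ≤ n) : s n (n - 1) + 1 = n.choose 2 := by
  obtain ⟨m, rfl⟩ : ∃ m, n = m + 2 := ⟨n - 2, by omega⟩
  have ha := two_mul_s (m + 2) (m + 1) (by omega)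
  rw [show 2 * (m + 2) - (m + 1) = m + 3 from by omega,
    show m + 1 - 1 = m from by omega] at ha
  rw [Nat.choose_two_right]
  have hb : 2 * ((m + 2) * (m + 2 - 1) / 2) = (m + 2) * (m + 2 - 1) := by
    apply Nat.mul_div_cancel'
    rw [show m + 2 - 1 = m + 1 from by omega, mul_comm]
    exact (Nat.even_mul_succ_self (m + 1)).two_dvd
  rw [show m + 2 - 1 = m + 1 from by omega] at hb ⊢
  have key : (m + 2) * (m + 1) = m * (m + 3) + 2 := by ring
  omega

lemma off_le (n i j : ℕ) (hn : 2 ≤ n) (h : 1 ≤ i) (hij : i < j) (hj : j ≤ n) :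
    off n i j ≤ n.choose 2 - 1 := by
  have htop := s_top n hn
  have hmax : off n i j ≤ off n (n - 1) n := by
    rcases Nat.lt_or_ge i (n - 1) with h1 | h1
    · exact le_of_lt (off_lt_off n i j (n - 1) n h hij hj (by omega) le_rfl (Or.inl h1))
    · have hi : i = n - 1 := by omega
      have hjn : j = n := by omega
      subst hi; subst hjn
      exact le_rfl
  unfold off at hmax ⊢
  omega

/-- the pair set -/
def auxP (n : ℕ) : Finset ((_ : ℕ) × ℕ) :=
  (Finset.Icc 1 n).sigma fun i => Finset.Icc (i + 1) n

/-- the summand -/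
def auxf (n y : ℕ) (p : (_ : ℕ) × ℕ) : ℕ :=
  if y.testBit (n - p.1) = y.testBit (n - p.2)
  then 2 ^ (n.choose 2 - 1 - off n p.1 p.2) else 0

lemma mem_auxP {n : ℕ} {p : (_ : ℕ) × ℕ} :
    p ∈ auxP n ↔ 1 ≤ p.1 ∧ p.1 < p.2 ∧ p.2 ≤ n := by
  cases p with
  | mk i j => simp [auxP, Finset.mem_sigma, Finset.mem_Icc]; omega

lemma concEnc_eq (n y : ℕ) : concEnc n y = ∑ p ∈ auxP n, auxf n y p := by
  unfold concEnc auxP auxf off s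
  exact Finset.sum_sigma' _ _ _

lemma off_inj (n : ℕ) {p q : (_ : ℕ) × ℕ} (hp : p ∈ auxP n) (hq : q ∈ auxP n)
    (h : off n p.1 p.2 = off n q.1 q.2) : p = q := by
  obtain ⟨i, j⟩ := p
  obtain ⟨i', j'⟩ := q
  rw [mem_auxP] at hp hq
  simp only at hp hq h ⊢
  rcases lt_trichotomy i i' with h1 | h1 | h1
  · have := off_lt_off n i j i' j' hp.1 hp.2.1 hp.2.2 hq.2.1 hq.2.2 (Or.inl h1)
    omega
  · subst h1
    rcases lt_trichotomy j j' with h2 | h2 | h2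
    · have := off_lt_off n i j i j' hp.1 hp.2.1 hp.2.2 hq.2.1 hq.2.2 (Or.inr ⟨rfl, h2⟩)
      omega
    · subst h2; rfl
    · have := off_lt_off n i j' i j hq.1 hq.2.1 hq.2.2 hp.2.1 hp.2.2 (Or.inr ⟨rfl, h2⟩)
      omega
  · have := off_lt_off n i' j' i j hq.1 hq.2.1 hq.2.2 hp.2.1 hp.2.2 (Or.inl h1)
    omega

lemma sum_range_two_pow (E : ℕ) : ∑ v ∈ Finset.range E, 2 ^ v = 2 ^ E - 1 := by
  induction E with
  | zero => simp
  | succ m ih =>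
    rw [Finset.sum_range_succ, ih, pow_succ]
    have : 1 ≤ 2 ^ m := Nat.one_le_two_pow
    omega

lemma sum_two_pow_le {α : Type*} [DecidableEq α] (S : Finset α) (e : α → ℕ) (E : ℕ)
    (hE : ∀ p ∈ S, e p < E) (hinj : ∀ p ∈ S, ∀ q ∈ S, e p = e q → p = q) :
    ∑ p ∈ S, 2 ^ e p ≤ 2 ^ E - 1 := by
  rw [← Finset.sum_image (f := fun v => 2 ^ v) hinj]
  have h2 : S.image e ⊆ Finset.range E := by
    intro v hv
    rw [Finset.mem_image] at hv
    obtain ⟨p, hp, rfl⟩ := hv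
    exact Finset.mem_range.2 (hE p hp)
  calc ∑ v ∈ S.image e, 2 ^ v ≤ ∑ v ∈ Finset.range E, 2 ^ v :=
        Finset.sum_le_sum_of_subset h2
    _ = 2 ^ E - 1 := sum_range_two_pow E

lemma succ_testBit (x k : ℕ) (hk : x.testBit k = false)
    (hlt : ∀ m, m < k → x.testBit m = true) :
    (x + 1).testBit k = true ∧ ∀ m, k < m → (x + 1).testBit m = x.testBit m := by
  have hmod : x % 2 ^ (k + 1) = 2 ^ k - 1 := by
    apply Nat.eq_of_testBit_eq
    intro i
    rw [Nat.testBit_mod_two_pow, Nat.testBit_two_pow_sub_one]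
    rcases lt_trichotomy i k with h | rfl | h
    · simp [hlt i h, h, Nat.lt_succ_of_lt h]
    · simp [hk]
    · have h1 : ¬ i < k + 1 := by omega
      have h2 : ¬ i < k := by omega
      simp [h1, h2]
  have hpow : (1 : ℕ) ≤ 2 ^ k := Nat.one_le_two_pow
  have hpow2 : 2 ^ k < 2 ^ (k + 1) := by rw [pow_succ]; omega
  have hx : x = 2 ^ (k + 1) * (x / 2 ^ (k + 1)) + (2 ^ k - 1) := by
    conv_lhs => rw [← Nat.div_add_mod x (2 ^ (k + 1))]
    rw [hmod]
  have hx1 : x + 1 = 2 ^ (k + 1) * (x / 2 ^ (k + 1)) + 2 ^ k := by omega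
  constructor
  · have hmod2 : (x + 1) % 2 ^ (k + 1) = 2 ^ k := by
      rw [hx1, Nat.mul_add_mod]
      exact Nat.mod_eq_of_lt hpow2
    have h2 := Nat.testBit_mod_two_pow (x + 1) (k + 1) k
    rw [hmod2, Nat.testBit_two_pow_self] at h2
    simpa [Nat.lt_succ_self] using h2.symm
  · intro m hm
    have hdiv : (x + 1) / 2 ^ (k + 1) = x / 2 ^ (k + 1) := by
      conv_lhs => rw [hx1]
      rw [Nat.mul_add_div (by positivity), Nat.div_eq_of_lt hpow2]
      omega
    obtain ⟨t, rfl⟩ : ∃ t, m = (k + 1) + t := ⟨m - (k + 1), by omega⟩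
    rw [Nat.testBit_eq_decide_div_mod_eq, Nat.testBit_eq_decide_div_mod_eq, pow_add,
      ← Nat.div_div_eq_div_mul, ← Nat.div_div_eq_div_mul, hdiv]

end Stmt4Aux

open Stmt4Aux in
/-- For `n ≥ 2` and `2^(n-1) ≤ x < 2^n - 1` (so `x` and `x+1` are `n`-bit
numbers with leading digit `1`), `Λ_n(x+1) > Λ_n(x)`. -/
theorem stmt_4 (n x : ℕ) (hn : 2 ≤ n) (hx1 : 2 ^ (n - 1) ≤ x)
    (hx2 : x < 2 ^ n - 1) :
    concEnc n (x + 1) > concEnc n x := by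
  classical
  have hpow1 : (1 : ℕ) ≤ 2 ^ (n - 1) := Nat.one_le_two_pow
  have hpown : 2 ^ n = 2 * 2 ^ (n - 1) := by
    conv_lhs => rw [show n = (n - 1) + 1 from by omega]
    rw [pow_succ]; ring
  have htop : x.testBit (n - 1) = true := by
    rw [Nat.testBit_eq_decide_div_mod_eq]
    have hdiv : x / 2 ^ (n - 1) = 1 :=
      Nat.div_eq_of_lt_le (by simpa using hx1) (by omega)
    simp [hdiv]
  have hfull : ¬ (∀ i, i < n → x.testBit i = true) := by
    intro hall
    have hmod : x % 2 ^ n = 2 ^ n - 1 := by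
      apply Nat.eq_of_testBit_eq
      intro i
      rw [Nat.testBit_mod_two_pow, Nat.testBit_two_pow_sub_one]
      rcases Nat.lt_or_ge i n with hi | hi
      · simp [hi, hall i hi]
      · simp [show ¬ i < n from by omega]
    have := Nat.mod_le x (2 ^ n)
    omega
  have hex : ∃ m, x.testBit m = false := by
    by_contra h
    push_neg at h
    simp only [Bool.not_eq_false] at h
    exact hfull fun i _ => h i
  set k := Nat.find hex with hkdef
  have hkbit : x.testBit k = false := Nat.find_spec hex
  have hklt : ∀ m, m < k → x.testBit m = true := by
    intro m hm
    have := Nat.find_min hex hm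
    simpa using this
  have hkn : k ≤ n - 2 := by
    by_contra hcon
    push_neg at hcon
    apply hfull
    intro i hi
    rcases Nat.lt_or_ge i (n - 1) with h1 | h1
    · exact hklt i (by omega)
    · rw [show i = n - 1 from by omega]
      exact htop
  obtain ⟨hbitk, hbithigh⟩ := succ_testBit x k hkbit hklt
  have htop' : (x + 1).testBit (n - 1) = true := by
    rw [hbithigh (n - 1) (by omega)]; exact htop
  -- combinatorial setup
  have hC1 : s n (n - 1) + 1 = n.choose 2 := s_top n hn
  have hCge : n - 1 ≤ n.choose 2 := by
    rcases Nat.lt_or_ge n 3 with h3 | h3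
    · interval_cases n
      decide
    · have := s_two_le n hn (n - 1) (by omega) (by omega)
      omega
  have h2E : (1 : ℕ) ≤ 2 ^ (n.choose 2 - 1 - (n - k - 2)) := Nat.one_le_two_pow
  have hp0P : (⟨1, n - k⟩ : (_ : ℕ) × ℕ) ∈ auxP n :=
    mem_auxP.2 ⟨le_rfl, show 1 < n - k from by omega, show n - k ≤ n from by omega⟩
  have hoffp0 : off n 1 (n - k) = n - k - 2 := by
    unfold off; rw [s_one]; omega
  -- the head sums agree
  have hhead : ∑ p ∈ (auxP n).filter (fun p => off n p.1 p.2 < n - k - 2), auxf n (x + 1) p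
      = ∑ p ∈ (auxP n).filter (fun p => off n p.1 p.2 < n - k - 2), auxf n x p := by
    apply Finset.sum_congr rfl
    rintro ⟨i, j⟩ hp
    rw [Finset.mem_filter] at hp
    obtain ⟨hpP, hoff⟩ := hp
    rw [mem_auxP] at hpP
    simp only at hpP hoff
    have hi1 : i = 1 := by
      by_contra hne
      have h2 : 2 ≤ i := by omega
      have hs := s_two_le n hn i h2 (by omega)
      have hle : s n i ≤ off n i j := Nat.le_add_right _ _
      omega
    subst hi1
    have hj : j < n - k := by
      unfold off at hoff
      rw [s_one] at hoff
      omega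
    show auxf n (x + 1) ⟨1, j⟩ = auxf n x ⟨1, j⟩
    unfold auxf
    simp only
    rw [hbithigh (n - 1) (by omega), hbithigh (n - j) (by omega)]
  -- membership of the pivot pair in the tail
  have hp0Q : (⟨1, n - k⟩ : (_ : ℕ) × ℕ)
      ∈ (auxP n).filter (fun p => ¬ off n p.1 p.2 < n - k - 2) := by
    rw [Finset.mem_filter]
    refine ⟨hp0P, ?_⟩
    simp only
    rw [hoffp0]
    omega
  have hfx0 : auxf n x (⟨1, n - k⟩ : (_ : ℕ) × ℕ) = 0 := by
    unfold auxf
    simp only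
    rw [show n - (n - k) = k from by omega, htop, hkbit]
    simp
  have hfx1 : auxf n (x + 1) (⟨1, n - k⟩ : (_ : ℕ) × ℕ)
      = 2 ^ (n.choose 2 - 1 - (n - k - 2)) := by
    unfold auxf
    simp only
    rw [show n - (n - k) = k from by omega, htop', hbitk, hoffp0]
    simp
  -- tail bound for x
  have htailx : ∑ p ∈ (auxP n).filter (fun p => ¬ off n p.1 p.2 < n - k - 2), auxf n x p
      ≤ 2 ^ (n.choose 2 - 1 - (n - k - 2)) - 1 := by
    rw [← Finset.add_sum_erase _ _ hp0Q, hfx0, zero_add]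
    have hstep : ∀ p ∈ ((auxP n).filter (fun p => ¬ off n p.1 p.2 < n - k - 2)).erase
        (⟨1, n - k⟩ : (_ : ℕ) × ℕ), auxf n x p ≤ 2 ^ (n.choose 2 - 1 - off n p.1 p.2) := by
      intro p hp
      unfold auxf
      split
      · exact le_rfl
      · exact Nat.zero_le _
    calc ∑ p ∈ ((auxP n).filter (fun p => ¬ off n p.1 p.2 < n - k - 2)).erase
          (⟨1, n - k⟩ : (_ : ℕ) × ℕ), auxf n x p
        ≤ ∑ p ∈ ((auxP n).filter (fun p => ¬ off n p.1 p.2 < n - k - 2)).erase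
          (⟨1, n - k⟩ : (_ : ℕ) × ℕ), 2 ^ (n.choose 2 - 1 - off n p.1 p.2) :=
          Finset.sum_le_sum hstep
      _ ≤ 2 ^ (n.choose 2 - 1 - (n - k - 2)) - 1 := by
          apply sum_two_pow_le
          · intro p hp
            have hne := Finset.ne_of_mem_erase hp
            have hpQ := Finset.mem_of_mem_erase hp
            rw [Finset.mem_filter] at hpQ
            obtain ⟨hpP, hoff⟩ := hpQ
            have hmem := mem_auxP.1 hpP
            have hle := off_le n p.1 p.2 hn hmem.1 hmem.2.1 hmem.2.2
            have hgt : n - k - 2 < off n p.1 p.2 := by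
              rcases Nat.lt_or_ge (n - k - 2) (off n p.1 p.2) with h | h
              · exact h
              · exfalso
                apply hne
                apply off_inj n hpP hp0P
                show off n p.1 p.2 = off n 1 (n - k)
                rw [hoffp0]
                omega
            omega
          · intro p hp q hq heq
            have hpQ := Finset.mem_of_mem_erase hp
            have hqQ := Finset.mem_of_mem_erase hq
            rw [Finset.mem_filter] at hpQ hqQ
            have hmp := mem_auxP.1 hpQ.1
            have hmq := mem_auxP.1 hqQ.1
            have h1 := off_le n p.1 p.2 hn hmp.1 hmp.2.1 hmp.2.2
            have h2 := off_le n q.1 q.2 hn hmq.1 hmq.2.1 hmq.2.2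
            apply off_inj n hpQ.1 hqQ.1
            omega
  -- tail lower bound for x+1
  have htailx1 : 2 ^ (n.choose 2 - 1 - (n - k - 2))
      ≤ ∑ p ∈ (auxP n).filter (fun p => ¬ off n p.1 p.2 < n - k - 2), auxf n (x + 1) p := by
    rw [← hfx1]
    exact Finset.single_le_sum (fun i _ => Nat.zero_le _) hp0Q
  have hx_eq : concEnc n x
      = (∑ p ∈ (auxP n).filter (fun p => off n p.1 p.2 < n - k - 2), auxf n x p)
      + ∑ p ∈ (auxP n).filter (fun p => ¬ off n p.1 p.2 < n - k - 2), auxf n x p := by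
    rw [concEnc_eq, Finset.sum_filter_add_sum_filter_not]
  have hx1_eq : concEnc n (x + 1)
      = (∑ p ∈ (auxP n).filter (fun p => off n p.1 p.2 < n - k - 2), auxf n (x + 1) p)
      + ∑ p ∈ (auxP n).filter (fun p => ¬ off n p.1 p.2 < n - k - 2), auxf n (x + 1) p := by
    rw [concEnc_eq, Finset.sum_filter_add_sum_filter_not]
  omega
end

section
/- For every n ≥ 1 and every natural number x with 0 ≤ x < 2^n, one has Λ_{n+1}(x) = (2^n - 1 - x)·2^(C(n,2)) + Λ_n(x); that is, prepending a 0 bit to an n-bit string x yields a concurrence vector whose encoding equals the complement of x concatenated with λ(x): λ(0⋮x) = x̄ ⋮ λ(x). -/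
lemma sumbit : ∀ n x : ℕ, x < 2 ^ n →
    ∑ k ∈ Finset.range n, (if x.testBit k then 2 ^ k else 0) = x := by
  intro n
  induction n with
  | zero => intro x hx; interval_cases x; simp
  | succ n ih =>
    intro x hx
    rw [Finset.sum_range_succ]
    have h1 : ∑ k ∈ Finset.range n, (if x.testBit k then 2 ^ k else 0)
        = ∑ k ∈ Finset.range n, (if (x % 2 ^ n).testBit k then 2 ^ k else 0) := by
      apply Finset.sum_congr rfl
      intro k hk
      rw [Nat.testBit_mod_two_pow]
      simp [Finset.mem_range.mp hk]
    rw [h1, ih _ (Nat.mod_lt _ (by positivity))]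
    have h2 : x.testBit n = decide (x / 2 ^ n % 2 = 1) := Nat.testBit_eq_decide_div_mod_eq
    have h3 : x / 2 ^ n < 2 := by
      apply Nat.div_lt_of_lt_mul; rw [pow_succ] at hx; omega
    have h4 := Nat.div_add_mod x (2 ^ n)
    interval_cases h : x / 2 ^ n <;> simp [h2, h] <;> omega

lemma sumbitc (n x : ℕ) (hx : x < 2 ^ n) :
    ∑ k ∈ Finset.range n, (if x.testBit k = false then 2 ^ k else 0) = 2 ^ n - 1 - x := by
  have h1 : ∑ k ∈ Finset.range n, ((if x.testBit k = false then 2 ^ k else 0)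
      + (if x.testBit k then 2 ^ k else 0)) = ∑ k ∈ Finset.range n, 2 ^ k := by
    apply Finset.sum_congr rfl
    intro k _
    cases x.testBit k <;> simp
  rw [Finset.sum_add_distrib, sumbit n x hx] at h1
  have h2 : ∑ k ∈ Finset.range n, 2 ^ k = 2 ^ n - 1 := by
    have := Nat.geomSum_eq (le_refl 2) n
    simp at this
    omega
  omega

lemma choose_two_succ (k : ℕ) : (k + 1).choose 2 = k.choose 2 + k := by
  rw [Nat.choose_succ_succ, Nat.choose_one_right, add_comm]

/-- Prepending a `0` bit: for `n ≥ 1` and `x < 2^n`,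
`Λ_{n+1}(x) = (2^n - 1 - x)·2^C(n,2) + Λ_n(x)`, i.e. `λ(0⋮x) = x̄ ⋮ λ(x)`. -/
theorem stmt_5 (n x : ℕ) (hn : 1 ≤ n) (hx : x < 2 ^ n) :
    concEnc (n + 1) x = (2 ^ n - 1 - x) * 2 ^ n.choose 2 + concEnc n x := by
  unfold concEnc
  have hsplit : Finset.Icc 1 (n + 1) = insert 1 (Finset.Icc 2 (n + 1)) := by
    ext a; simp [Finset.mem_Icc, Finset.mem_insert]; omega
  rw [hsplit, Finset.sum_insert (by simp)]
  congr 1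
  · -- first row: i = 1
    have hbn : x.testBit n = false := Nat.testBit_lt_two_pow hx
    have h1 : ∑ j ∈ Finset.Icc (1 + 1) (n + 1),
        (if x.testBit (n + 1 - 1) = x.testBit (n + 1 - j)
          then 2 ^ ((n + 1).choose 2 - 1 - ((1 - 1) * (2 * (n + 1) - 1) / 2 + (j - 1 - 1)))
          else 0)
        = ∑ k ∈ Finset.range n, (if x.testBit k = false then 2 ^ (n.choose 2 + k) else 0) := by
      apply Finset.sum_nbij' (fun j => n + 1 - j) (fun k => n + 1 - k)
      · intro a ha; simp only [Finset.mem_Icc] at ha; simp only [Finset.mem_range]; omega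
      · intro a ha; simp only [Finset.mem_range] at ha; simp only [Finset.mem_Icc]; omega
      · intro a ha; simp only [Finset.mem_Icc] at ha; omega
      · intro a ha; simp only [Finset.mem_range] at ha; omega
      · intro a ha
        simp only [Finset.mem_Icc] at ha
        have e1 : n + 1 - 1 = n := by omega
        rw [e1, hbn]
        have e3 : (n + 1).choose 2 - 1 - ((1 - 1) * (2 * (n + 1) - 1) / 2 + (a - 1 - 1))
            = n.choose 2 + (n + 1 - a) := by
          rw [choose_two_succ]
          omega
        rw [e3]
        cases hB : x.testBit (n + 1 - a) <;> simp [hB]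
    rw [h1]
    have h2 : ∀ k ∈ Finset.range n, (if x.testBit k = false then 2 ^ (n.choose 2 + k) else 0)
        = (if x.testBit k = false then 2 ^ k else 0) * 2 ^ n.choose 2 := by
      intro k _
      rw [pow_add]
      split <;> ring
    rw [Finset.sum_congr rfl h2, ← Finset.sum_mul, sumbitc n x hx]
  · -- remaining rows
    apply Finset.sum_nbij' (fun a => a - 1) (fun a => a + 1)
    · intro a ha; simp only [Finset.mem_Icc] at *; omega
    · intro a ha; simp only [Finset.mem_Icc] at *; omega
    · intro a ha; simp only [Finset.mem_Icc] at ha; omega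
    · intro a ha; simp only [Finset.mem_Icc] at ha; omega
    · intro a ha
      simp only [Finset.mem_Icc] at ha
      apply Finset.sum_nbij' (fun b => b - 1) (fun b => b + 1)
      · intro b hb; simp only [Finset.mem_Icc] at *; omega
      · intro b hb; simp only [Finset.mem_Icc] at *; omega
      · intro b hb; simp only [Finset.mem_Icc] at hb; omega
      · intro b hb; simp only [Finset.mem_Icc] at hb; omega
      · intro b hb
        simp only [Finset.mem_Icc] at hb
        -- b ≥ a + 1 ≥ 3, b ≤ n + 1, a ≥ 2, a ≤ n
        have harg1 : n + 1 - a = n - (a - 1) := by omega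
        have harg2 : n + 1 - b = n - (b - 1) := by omega
        have hexp : (n + 1).choose 2 - 1 - ((a - 1) * (2 * (n + 1) - a) / 2 + (b - a - 1))
            = n.choose 2 - 1 - ((a - 1 - 1) * (2 * n - (a - 1)) / 2 + (b - 1 - (a - 1) - 1)) := by
          obtain ⟨i, rfl⟩ : ∃ i, a = i + 2 := ⟨a - 2, by omega⟩
          obtain ⟨m, rfl⟩ : ∃ m, n = i + 1 + m := ⟨n - i - 1, by omega⟩
          rw [show i + 2 - 1 = i + 1 from by omega,
              show 2 * (i + 1 + m + 1) - (i + 2) = i + 2 * m + 2 from by omega,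
              show i + 1 - 1 = i from by omega,
              show 2 * (i + 1 + m) - (i + 1) = i + 2 * m + 1 from by omega,
              choose_two_succ]
          obtain ⟨t0, ht0⟩ : Even (i * (i + 1)) := Nat.even_mul_succ_self i
          have e1 : (i + 1) * (i + 2 * m + 2) = (t0 + t0) + 2 * (i + 1) + 2 * (m * (i + 1)) := by
            rw [← ht0]; ring
          have e0 : i * (i + 2 * m + 1) = (t0 + t0) + 2 * (m * i) := by
            rw [← ht0]; ring
          have dm : m * (i + 1) = m * i + m := by ring
          set M1 := m * (i + 1) with hM1
          set M0 := m * i with hM0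
          set P1 := (i + 1) * (i + 2 * m + 2) with hP1
          set P0 := i * (i + 2 * m + 1) with hP0
          omega
        rw [harg1, harg2, hexp]
end

section
/- For every n ≥ 1 and every natural number x with 0 ≤ x < 2^n, one has Λ_{n+1}(2^n + x) = x·2^(C(n,2)) + Λ_n(x); that is, prepending a 1 bit to an n-bit string x yields a concurrence vector whose encoding equals x concatenated with λ(x): λ(1⋮x) = x ⋮ λ(x). -/
lemma sum_testBit_aux (n : ℕ) : ∀ x : ℕ, x < 2 ^ n →
    ∑ k ∈ Finset.range n, (if x.testBit k then 2 ^ k else 0) = x := by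
  induction n with
  | zero => intro x hx; interval_cases x <;> simp
  | succ n ih =>
    intro x hx
    rw [Finset.sum_range_succ']
    have h0 : (if x.testBit 0 then 2 ^ 0 else 0) = x % 2 := by
      rcases Nat.mod_two_eq_zero_or_one x with h | h <;> simp [Nat.testBit_zero, h]
    have h1 : ∀ k, (if x.testBit (k + 1) then 2 ^ (k + 1) else 0)
        = 2 * (if (x / 2).testBit k then 2 ^ k else 0) := by
      intro k; rw [Nat.testBit_add_one]; split <;> ring
    simp_rw [h1]
    rw [← Finset.mul_sum, ih (x / 2) (by omega), h0]
    omega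

/-- Prepending a `1` bit: for `n ≥ 1` and `x < 2^n`,
`Λ_{n+1}(2^n + x) = x·2^C(n,2) + Λ_n(x)`, i.e. `λ(1⋮x) = x ⋮ λ(x)`. -/
theorem stmt_6 (n x : ℕ) (hn : 1 ≤ n) (hx : x < 2 ^ n) :
    concEnc (n + 1) (2 ^ n + x) = x * 2 ^ n.choose 2 + concEnc n x := by
  have htop : (2 ^ n + x).testBit n = true := by
    rw [Nat.testBit_two_pow_add_eq, Nat.testBit_lt_two_pow hx]; rfl
  have hlow : ∀ m, m < n → (2 ^ n + x).testBit m = x.testBit m := fun m hm =>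
    Nat.testBit_two_pow_add_gt hm x
  have hC : (n + 1).choose 2 = n.choose 2 + n := by
    rw [Nat.choose_succ_succ]; simp [Nat.choose_one_right]; ring
  unfold concEnc
  have hsplit : Finset.Icc 1 (n + 1) = insert 1 (Finset.Icc 2 (n + 1)) := by
    ext a; simp only [Finset.mem_Icc, Finset.mem_insert]; omega
  rw [hsplit, Finset.sum_insert (by simp)]
  congr 1
  · -- i = 1 row equals x * 2 ^ C(n,2)
    have : ∀ j ∈ Finset.Icc (1 + 1) (n + 1),
        (if (2 ^ n + x).testBit (n + 1 - 1) = (2 ^ n + x).testBit (n + 1 - j)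
          then 2 ^ ((n + 1).choose 2 - 1 - ((1 - 1) * (2 * (n + 1) - 1) / 2 + (j - 1 - 1)))
          else 0)
        = (if x.testBit (n + 1 - j) then 2 ^ (n + 1 - j) else 0) * 2 ^ n.choose 2 := by
      intro j hj
      simp only [Finset.mem_Icc] at hj
      rw [show n + 1 - 1 = n by omega, htop, hlow (n + 1 - j) (by omega)]
      have he : (n + 1).choose 2 - 1 - ((1 - 1) * (2 * (n + 1) - 1) / 2 + (j - 1 - 1))
          = (n + 1 - j) + n.choose 2 := by
        simp only [Nat.sub_self, Nat.zero_mul, Nat.zero_div, Nat.zero_add, hC]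
        generalize n.choose 2 = C
        omega
      rw [he, pow_add]
      by_cases hb : x.testBit (n + 1 - j) <;> simp [hb]
    have hsum : ∑ j ∈ Finset.Icc (1 + 1) (n + 1),
        (if x.testBit (n + 1 - j) then 2 ^ (n + 1 - j) else 0)
        = ∑ k ∈ Finset.range n, (if x.testBit k then 2 ^ k else 0) := by
      apply Finset.sum_nbij' (fun j => n + 1 - j) (fun k => n + 1 - k)
      · intro j hj; simp only [Finset.mem_Icc] at hj; simp only [Finset.mem_range]; omega
      · intro k hk; simp only [Finset.mem_range] at hk; simp only [Finset.mem_Icc]; omega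
      · intro j hj; simp only [Finset.mem_Icc] at hj; omega
      · intro k hk; simp only [Finset.mem_range] at hk; omega
      · intro j hj; rfl
    rw [Finset.sum_congr rfl this, ← Finset.sum_mul, hsum, sum_testBit_aux n x hx]
  · -- remaining rows equal concEnc n x
    have hmap : Finset.Icc 2 (n + 1) = (Finset.Icc 1 n).map
        ⟨fun i => i + 1, add_left_injective 1⟩ := by
      ext a; simp only [Finset.mem_Icc, Finset.mem_map, Function.Embedding.coeFn_mk]
      constructor
      · intro h; exact ⟨a - 1, by omega, by omega⟩
      · rintro ⟨b, hb, rfl⟩; omega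
    rw [hmap, Finset.sum_map]
    simp only [Function.Embedding.coeFn_mk]
    apply Finset.sum_congr rfl
    intro i hi
    simp only [Finset.mem_Icc] at hi
    have hmap2 : Finset.Icc (i + 1 + 1) (n + 1) = (Finset.Icc (i + 1) n).map
        ⟨fun j => j + 1, add_left_injective 1⟩ := by
      ext a; simp only [Finset.mem_Icc, Finset.mem_map, Function.Embedding.coeFn_mk]
      constructor
      · intro h; exact ⟨a - 1, by omega, by omega⟩
      · rintro ⟨b, hb, rfl⟩; omega
    rw [hmap2, Finset.sum_map]
    simp only [Function.Embedding.coeFn_mk]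
    apply Finset.sum_congr rfl
    intro j hj
    simp only [Finset.mem_Icc, Function.Embedding.coeFn_mk] at hj ⊢
    rw [show n + 1 - (i + 1) = n - i by omega, show n + 1 - (j + 1) = n - j by omega,
      hlow (n - i) (by omega), hlow (n - j) (by omega)]
    have hdiv : (i + 1 - 1) * (2 * (n + 1) - (i + 1)) / 2 = (i - 1) * (2 * n - i) / 2 + n := by
      obtain ⟨a, rfl⟩ : ∃ a, i = a + 1 := ⟨i - 1, by omega⟩
      have hB : 2 * (n + 1) - (a + 1 + 1) = (2 * n - (a + 1)) + 1 := by omega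
      set m := 2 * n - (a + 1) with hm
      rw [show a + 1 + 1 - 1 = a + 1 from rfl, show a + 1 - 1 = a from rfl, hB]
      have key : (a + 1) * (m + 1) = a * m + 2 * n := by
        have h7 : a + m + 1 = 2 * n := by omega
        calc (a + 1) * (m + 1) = a * m + (a + m + 1) := by ring
        _ = a * m + 2 * n := by rw [h7]
      rw [key, Nat.add_mul_div_left _ _ (by norm_num : (0:ℕ) < 2)]
    have hexp : (n + 1).choose 2 - 1 - ((i + 1 - 1) * (2 * (n + 1) - (i + 1)) / 2
          + (j + 1 - (i + 1) - 1))
        = n.choose 2 - 1 - ((i - 1) * (2 * n - i) / 2 + (j - i - 1)) := by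
      rw [hdiv, hC]
      generalize n.choose 2 = C
      generalize (i - 1) * (2 * n - i) / 2 = D
      omega
    rw [hexp]
end

section
/- For every n ≥ 2, the sequence of encoded vertices of 1-CUT(n) is strictly increasing: v_1 < v_2 < ⋯ < v_{2^(n-1)}, where v_k = Λ_n(2^(n-1) + k - 1) for k = 1, …, 2^(n-1). -/
lemma conc_div_aux (i m : ℕ) (h1 : 1 ≤ i) (h2 : i ≤ m) :
    i * (2 * m + 1 - i) / 2 = (i - 1) * (2 * m - i) / 2 + m := by
  have key : i * (2 * m + 1 - i) = (i - 1) * (2 * m - i) + 2 * m := by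
    zify [h1, show i ≤ 2 * m by omega, show i ≤ 2 * m + 1 by omega]
    ring
  rw [key, Nat.add_mul_div_left _ _ (by norm_num : (0:ℕ) < 2)]

lemma conc_choose_succ (m : ℕ) : (m + 1).choose 2 = m.choose 2 + m := by
  rw [show (2:ℕ) = 1 + 1 from rfl, Nat.choose_succ_succ', Nat.choose_one_right]
  omega

lemma conc_geom (m : ℕ) : ∑ e ∈ Finset.range m, 2 ^ e = 2 ^ m - 1 := by
  induction m with
  | zero => simp
  | succ m ih =>
      rw [Finset.sum_range_succ, ih]
      have : 1 ≤ 2 ^ m := Nat.one_le_two_pow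
      rw [pow_succ]
      omega

/-- binary expansion of `z < 2^m` via its test bits -/
lemma conc_sum_testBit (m : ℕ) : ∀ z : ℕ, z < 2 ^ m →
    (∑ e ∈ Finset.range m, if z.testBit e then 2 ^ e else 0) = z := by
  induction m with
  | zero => intro z hz; interval_cases z; simp
  | succ m ih =>
      intro z hz
      rw [Finset.sum_range_succ]
      have hmod : (∑ e ∈ Finset.range m, if z.testBit e then 2 ^ e else 0)
          = z % 2 ^ m := by
        rw [← ih (z % 2 ^ m) (Nat.mod_lt _ (Nat.two_pow_pos m))]
        refine Finset.sum_congr rfl fun e he => ?_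
        rw [Nat.testBit_mod_two_pow]
        simp [Finset.mem_range.mp he]
      rw [hmod]
      have hdm := Nat.div_add_mod z (2 ^ m)
      have hq : z / 2 ^ m < 2 := by
        rw [Nat.div_lt_iff_lt_mul (Nat.two_pow_pos m)]
        calc z < 2 ^ (m + 1) := hz
        _ = 2 * 2 ^ m := by ring
      have hbit : z.testBit m = decide (z / 2 ^ m % 2 = 1) := Nat.testBit_eq_decide_div_mod_eq
      have hq2 : z / 2 ^ m = 0 ∨ z / 2 ^ m = 1 := Nat.le_one_iff_eq_zero_or_eq_one.mp (Nat.lt_succ_iff.mp hq)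
      by_cases hb : z.testBit m
      · rw [hb]
        simp only [if_true]
        rcases hq2 with h | h
        · exfalso; rw [h] at hbit; rw [hb] at hbit; simp at hbit
        · rw [h] at hdm; omega
      · rw [if_neg hb]
        rcases hq2 with h | h
        · rw [h] at hdm; omega
        · exfalso; rw [h] at hbit; simp at hbit; exact hb hbit

/-- Splitting off the `i = 1` row of `concEnc`. -/
lemma concEnc_succ_s14 (m y : ℕ) :
    concEnc (m + 1) y =
      (∑ j ∈ Finset.Icc 2 (m + 1),
        if y.testBit m = y.testBit (m + 1 - j)
        then 2 ^ ((m + 1).choose 2 - 1 - (j - 2)) else 0)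
      + concEnc m (y % 2 ^ m) := by
  unfold concEnc
  have hins : Finset.Icc 1 (m + 1) = insert 1 (Finset.Icc 2 (m + 1)) := by
    ext a; simp; omega
  rw [hins, Finset.sum_insert (by simp)]
  congr 1
  · -- the i = 1 row
    refine Finset.sum_congr rfl fun j hj => ?_
    simp only [Finset.mem_Icc] at hj
    have h1 : m + 1 - 1 = m := by omega
    have h2 : (1 - 1) * (2 * (m + 1) - 1) / 2 + (j - 1 - 1) = j - 2 := by
      simp; omega
    rw [h1, h2]
  · -- the rows i ≥ 2 give `concEnc m (y % 2^m)`
    rw [show Finset.Icc 2 (m + 1) = Finset.map (addRightEmbedding 1) (Finset.Icc 1 m) by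
          rw [Finset.map_add_right_Icc]]
    rw [Finset.sum_map]
    refine Finset.sum_congr rfl fun i hi => ?_
    simp only [Finset.mem_Icc] at hi
    rw [show Finset.Icc (addRightEmbedding 1 i + 1) (m + 1)
          = Finset.map (addRightEmbedding 1) (Finset.Icc (i + 1) m) by
          rw [Finset.map_add_right_Icc]; rfl]
    rw [Finset.sum_map]
    refine Finset.sum_congr rfl fun j hj => ?_
    simp only [Finset.mem_Icc] at hj
    have hemb : ∀ a : ℕ, addRightEmbedding 1 a = a + 1 := fun a => rfl
    rw [hemb, hemb]
    have hb1 : (m + 1 - (i + 1)) = m - i := by omega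
    have hb2 : (m + 1 - (j + 1)) = m - j := by omega
    have hbm1 : (y % 2 ^ m).testBit (m - i) = y.testBit (m - i) := by
      rw [Nat.testBit_mod_two_pow]; simp [show m - i < m by omega]
    have hbm2 : (y % 2 ^ m).testBit (m - j) = y.testBit (m - j) := by
      rw [Nat.testBit_mod_two_pow]; simp [show m - j < m by omega]
    rw [hb1, hb2, hbm1, hbm2]
    have hexp : (m + 1).choose 2 - 1 -
          ((i + 1 - 1) * (2 * (m + 1) - (i + 1)) / 2 + (j + 1 - (i + 1) - 1))
        = m.choose 2 - 1 - ((i - 1) * (2 * m - i) / 2 + (j - i - 1)) := by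
      have e1 : i + 1 - 1 = i := by omega
      have e2 : 2 * (m + 1) - (i + 1) = 2 * m + 1 - i := by omega
      have e3 : j + 1 - (i + 1) - 1 = j - i - 1 := by omega
      rw [e1, e2, e3, conc_div_aux i m hi.1 hi.2, conc_choose_succ]
      omega
    rw [hexp]

/-- `concEnc m y` fits in `C(m,2)` bits. -/
lemma concEnc_lt_s14 (m : ℕ) : ∀ y : ℕ, concEnc m y < 2 ^ m.choose 2 := by
  induction m with
  | zero => intro y; simp [concEnc]
  | succ m ih =>
      intro y
      rw [concEnc_succ_s14]
      have h1 : (∑ j ∈ Finset.Icc 2 (m + 1),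
          if y.testBit m = y.testBit (m + 1 - j)
          then 2 ^ ((m + 1).choose 2 - 1 - (j - 2)) else 0)
          ≤ ∑ j ∈ Finset.Icc 2 (m + 1), 2 ^ ((m + 1).choose 2 - 1 - (j - 2)) := by
        refine Finset.sum_le_sum fun j _ => ?_
        split <;> simp
      have h2 : (∑ j ∈ Finset.Icc 2 (m + 1), 2 ^ ((m + 1).choose 2 - 1 - (j - 2)))
          = 2 ^ m.choose 2 * (2 ^ m - 1) := by
        rw [← Finset.Ico_add_one_right_eq_Icc, Finset.sum_Ico_eq_sum_range]
        have hrange : m + 1 + 1 - 2 = m := by omega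
        rw [hrange]
        have hcong : ∀ d ∈ Finset.range m,
            2 ^ ((m + 1).choose 2 - 1 - (2 + d - 2)) = 2 ^ (m.choose 2 + (m - 1 - d)) := by
          intro d hd
          simp only [Finset.mem_range] at hd
          rw [conc_choose_succ]
          congr 1
          omega
        rw [Finset.sum_congr rfl hcong,
            Finset.sum_range_reflect (fun d => 2 ^ (m.choose 2 + d)) m]
        simp only [pow_add]
        rw [← Finset.mul_sum, conc_geom]
      calc (∑ j ∈ Finset.Icc 2 (m + 1),
          if y.testBit m = y.testBit (m + 1 - j)
          then 2 ^ ((m + 1).choose 2 - 1 - (j - 2)) else 0) + concEnc m (y % 2 ^ m)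
          ≤ 2 ^ m.choose 2 * (2 ^ m - 1) + concEnc m (y % 2 ^ m) := by
            rw [← h2]; exact Nat.add_le_add_right h1 _
        _ < 2 ^ m.choose 2 * (2 ^ m - 1) + 2 ^ m.choose 2 := Nat.add_lt_add_left (ih _) _
        _ ≤ 2 ^ (m + 1).choose 2 := by
            rw [conc_choose_succ, pow_add, Nat.mul_sub, Nat.mul_one]
            have hle : 2 ^ m.choose 2 ≤ 2 ^ m.choose 2 * 2 ^ m :=
              Nat.le_mul_of_pos_right _ (Nat.two_pow_pos m)
            omega

/-- Key formula : the top-bit-set case. -/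
lemma concEnc_top (m z : ℕ) (hz : z < 2 ^ m) :
    concEnc (m + 1) (2 ^ m + z) = z * 2 ^ m.choose 2 + concEnc m z := by
  rw [concEnc_succ_s14]
  have hmod : (2 ^ m + z) % 2 ^ m = z := by
    rw [Nat.add_mod_left, Nat.mod_eq_of_lt hz]
  rw [hmod]
  congr 1
  have htop : (2 ^ m + z).testBit m = true := by
    rw [Nat.testBit_two_pow_add_eq, Nat.testBit_lt_two_pow hz]; rfl
  have hsum : (∑ j ∈ Finset.Icc 2 (m + 1),
      if (2 ^ m + z).testBit m = (2 ^ m + z).testBit (m + 1 - j)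
      then 2 ^ ((m + 1).choose 2 - 1 - (j - 2)) else 0)
      = ∑ j ∈ Finset.Icc 2 (m + 1),
        if z.testBit (m + 1 - j) then 2 ^ (m.choose 2 + (m - (j - 1))) else 0 := by
    refine Finset.sum_congr rfl fun j hj => ?_
    simp only [Finset.mem_Icc] at hj
    have hlow : (2 ^ m + z).testBit (m + 1 - j) = z.testBit (m + 1 - j) :=
      Nat.testBit_two_pow_add_gt (by omega) z
    rw [htop, hlow, conc_choose_succ]
    have : m.choose 2 + m - 1 - (j - 2) = m.choose 2 + (m - (j - 1)) := by omega
    rw [this]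
    by_cases hb : z.testBit (m + 1 - j) <;> simp [hb]
  rw [hsum, ← Finset.Ico_add_one_right_eq_Icc, Finset.sum_Ico_eq_sum_range]
  have hrange : m + 1 + 1 - 2 = m := by omega
  rw [hrange]
  have hcong : ∀ d ∈ Finset.range m,
      (if z.testBit (m + 1 - (2 + d)) then 2 ^ (m.choose 2 + (m - (2 + d - 1))) else 0)
      = (fun e => if z.testBit e then 2 ^ (m.choose 2 + e) else 0) (m - 1 - d) := by
    intro d hd
    simp only [Finset.mem_range] at hd
    have e1 : m + 1 - (2 + d) = m - 1 - d := by omega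
    have e2 : m - (2 + d - 1) = m - 1 - d := by omega
    rw [e1, e2]
  rw [Finset.sum_congr rfl hcong,
      Finset.sum_range_reflect (fun e => if z.testBit e then 2 ^ (m.choose 2 + e) else 0) m]
  have : (∑ e ∈ Finset.range m, if z.testBit e then 2 ^ (m.choose 2 + e) else 0)
      = 2 ^ m.choose 2 * ∑ e ∈ Finset.range m, (if z.testBit e then 2 ^ e else 0) := by
    rw [Finset.mul_sum]
    refine Finset.sum_congr rfl fun e _ => ?_
    rw [pow_add]
    split <;> simp
  rw [this, conc_sum_testBit m z hz, Nat.mul_comm]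

/-- For `n ≥ 2`, the encoded vertices `v_k = Λ_n(2^(n-1)+k-1)` of `1-CUT(n)`,
`k = 1, …, 2^(n-1)`, form a strictly increasing sequence. -/
theorem stmt_14 (n : ℕ) (hn : 2 ≤ n) (k l : ℕ) (hk : 1 ≤ k) (hkl : k < l)
    (hl : l ≤ 2 ^ (n - 1)) :
    concEnc n (2 ^ (n - 1) + k - 1) < concEnc n (2 ^ (n - 1) + l - 1) := by
  obtain ⟨m, rfl⟩ : ∃ m, n = m + 1 := ⟨n - 1, by omega⟩
  simp only [Nat.add_sub_cancel] at hl ⊢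
  have hk' : k - 1 < 2 ^ m := by omega
  have hl' : l - 1 < 2 ^ m := by omega
  have e1 : 2 ^ m + k - 1 = 2 ^ m + (k - 1) := by
    have : 1 ≤ 2 ^ m := Nat.one_le_two_pow
    omega
  have e2 : 2 ^ m + l - 1 = 2 ^ m + (l - 1) := by
    have : 1 ≤ 2 ^ m := Nat.one_le_two_pow
    omega
  rw [e1, e2, concEnc_top m (k - 1) hk', concEnc_top m (l - 1) hl']
  have hb1 := concEnc_lt_s14 m (k - 1)
  have hb2 : 0 ≤ concEnc m (l - 1) := Nat.zero_le _
  calc (k - 1) * 2 ^ m.choose 2 + concEnc m (k - 1)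
      < (k - 1) * 2 ^ m.choose 2 + 2 ^ m.choose 2 := Nat.add_lt_add_left hb1 _
    _ = (k - 1 + 1) * 2 ^ m.choose 2 := by ring
    _ ≤ (l - 1) * 2 ^ m.choose 2 := Nat.mul_le_mul_right _ (by omega)
    _ ≤ (l - 1) * 2 ^ m.choose 2 + concEnc m (l - 1) := Nat.le_add_right _ _
end
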